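/- For every nonnegative integer n and positive integer j, G_{n,j} is in bijection with S_{n,j}, and consequently ∑_{j ≥ 0} |G_{n,j}| = ∑_{j ≥ 0} |S_{n,j}|; that is, the number of Göllnitz–Gordon partitions of n equals the number of signed Göllnitz–Gordon partitions of n (where for j = 0 both sets consist of the empty partition when n = 0 and are empty otherwise). -/

import Mathlib

/-- The parity function: `P k = 0` if `k` is even and `P k = 1` if `k` is odd. -/
def P (m : ℤ) : ℤ := if Even m then 0 else 1

/-- The map `g` of the bijection: `γ = (γ₁, …, γ_j) ↦ (π, ν)` where
`π_k = γ_k + 4k - 2j - 2 + P(γ_k) + 2 ∑_{i=k+1}^j P(γ_i)` and `ν` contains the part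
`2k - 1` exactly for those `k` with `γ_k` odd.  (Indices here are 0-based, so the
`k`-th entry of the tuple, `k : Fin j`, is the `(k+1)`-st part.) -/
def gMap (j : ℕ) (γ : Fin j → ℤ) : (Fin j → ℤ) × Finset ℤ :=
  (fun k => γ k + 4 * ((k : ℤ) + 1) - 2 * j - 2 + P (γ k)
      + 2 * ∑ i ∈ Finset.Ioi k, P (γ i),
   Finset.image (fun k : Fin j => 2 * (k : ℤ) + 1)
     (Finset.univ.filter fun k => Odd (γ k)))

/-- The inverse map `h`: `(π, ν) ↦ γ` where
`γ_k = π_k - 4k + 2j + 2 - f_{2k-1} - 2 ∑_{i=k+1}^j f_{2i-1}`, `f_{2k-1}` being the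
multiplicity (0 or 1) of the part `2k - 1` in `ν`. -/
def hMap (j : ℕ) (σ : (Fin j → ℤ) × Finset ℤ) : Fin j → ℤ :=
  fun k => σ.1 k - 4 * ((k : ℤ) + 1) + 2 * (j : ℤ) + 2
    - (if 2 * (k : ℤ) + 1 ∈ σ.2 then 1 else 0)
    - 2 * ∑ i ∈ Finset.Ioi k, (if 2 * (i : ℤ) + 1 ∈ σ.2 then 1 else 0)

/-- `Gset n j` : Göllnitz–Gordon partitions of `n` with exactly `j` parts, as
weakly decreasing `j`-tuples `γ` of positive integers with `γ_i - γ_{i+1} ≥ 2`,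
and `γ_i - γ_{i+1} ≥ 3` whenever `γ_i` is even. -/
def Gset (n j : ℕ) : Set (Fin j → ℤ) :=
  {γ | (∀ k, 1 ≤ γ k) ∧
    (∀ i : ℕ, ∀ h : i + 1 < j,
      2 ≤ γ ⟨i, Nat.lt_of_succ_lt h⟩ - γ ⟨i + 1, h⟩ ∧
      (Even (γ ⟨i, Nat.lt_of_succ_lt h⟩) → 3 ≤ γ ⟨i, Nat.lt_of_succ_lt h⟩ - γ ⟨i + 1, h⟩)) ∧
    ∑ k, γ k = (n : ℤ)}

/-- `Sset n j` : signed Göllnitz–Gordon partitions of `n` whose positive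
subpartition `π` has exactly `j` parts: `π` is a weakly decreasing `j`-tuple of even
parts, each at least `2j`, and the negative subpartition `ν` is a set of distinct odd
positive parts, each at most `2j - 1` (hence there are at most `j` of them), with
`|π| - |ν| = n`. -/
def Sset (n j : ℕ) : Set ((Fin j → ℤ) × Finset ℤ) :=
  {σ | Antitone σ.1 ∧ (∀ k, 1 ≤ σ.1 k) ∧
    (∀ k, Even (σ.1 k) ∧ 2 * (j : ℤ) ≤ σ.1 k) ∧
    σ.2.card ≤ j ∧
    (∀ m ∈ σ.2, Odd m ∧ 1 ≤ m ∧ m ≤ 2 * (j : ℤ) - 1) ∧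
    (∑ k, σ.1 k) - (∑ m ∈ σ.2, m) = (n : ℤ)}

lemma P_even {m : ℤ} (h : Even m) : P m = 0 := if_pos h
lemma P_odd {m : ℤ} (h : Odd m) : P m = 1 := if_neg (Int.not_even_iff_odd.2 h)

lemma P_cases (m : ℤ) : (Even m ∧ P m = 0) ∨ (Odd m ∧ P m = 1) := by
  rcases Int.even_or_odd m with h | h
  · exact Or.inl ⟨h, P_even h⟩
  · exact Or.inr ⟨h, P_odd h⟩

lemma le_of_consec {j : ℕ} (f : Fin j → ℤ)
    (h : ∀ i : ℕ, ∀ hi : i + 1 < j, f ⟨i + 1, hi⟩ ≤ f ⟨i, Nat.lt_of_succ_lt hi⟩) :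
    Antitone f := by
  have key : ∀ d (a : ℕ) (h2 : a + d < j), f ⟨a + d, h2⟩ ≤ f ⟨a, by omega⟩ := by
    intro d
    induction d with
    | zero => intro a h2; exact le_of_eq rfl
    | succ d ih =>
        intro a h2
        have e1 : (⟨a + (d+1), h2⟩ : Fin j) = ⟨(a + d) + 1, by omega⟩ := rfl
        rw [e1]
        exact le_trans (h (a + d) (by omega)) (ih a (by omega))
  intro a b hab
  have hab' : (a : ℕ) ≤ (b : ℕ) := hab
  have e : b = ⟨(a : ℕ) + ((b : ℕ) - a), by omega⟩ := by
    apply Fin.ext; simp; omega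
  rw [e]
  exact key _ _ _

lemma Ioi_succ_insert {j : ℕ} (i : ℕ) (h : i + 1 < j) :
    (Finset.Ioi (⟨i, Nat.lt_of_succ_lt h⟩ : Fin j)) =
      insert ⟨i + 1, h⟩ (Finset.Ioi ⟨i + 1, h⟩) := by
  ext x
  simp only [Finset.mem_Ioi, Finset.mem_insert, Fin.lt_def, Fin.ext_iff]
  omega

lemma sum_Ioi_succ {j : ℕ} (i : ℕ) (h : i + 1 < j) (g : Fin j → ℤ) :
    ∑ x ∈ Finset.Ioi (⟨i, Nat.lt_of_succ_lt h⟩ : Fin j), g x =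
      g ⟨i + 1, h⟩ + ∑ x ∈ Finset.Ioi (⟨i + 1, h⟩ : Fin j), g x := by
  rw [Ioi_succ_insert i h, Finset.sum_insert (by simp)]

lemma Ioi_last_empty {j : ℕ} (hj : 0 < j) :
    (Finset.Ioi (⟨j - 1, by omega⟩ : Fin j)) = ∅ := by
  ext x
  simp only [Finset.mem_Ioi, Fin.lt_def, Finset.notMem_empty, iff_false, not_lt]
  omega

lemma two_mul_inj {j : ℕ} : Function.Injective (fun k : Fin j => 2 * (k : ℤ) + 1) := by
  intro a b hab
  simp only at hab
  apply Fin.ext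
  omega

lemma sum_coeff_zero (j : ℕ) : ∑ k : Fin j, (4 * ((k : ℤ) + 1) - 2 * j - 2) = 0 := by
  induction j with
  | zero => simp
  | succ m ih =>
      rw [Fin.sum_univ_castSucc]
      push_cast
      simp only [Fin.coe_castSucc] at *
      have : ∑ k : Fin m, (4 * ((k : ℤ) + 1) - 2 * (m+1) - 2)
          = (∑ k : Fin m, (4 * ((k : ℤ) + 1) - 2 * m - 2)) + ∑ k : Fin m, (-2 : ℤ) := by
        rw [← Finset.sum_add_distrib]; apply Finset.sum_congr rfl; intros; ring
      rw [this, ih]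
      simp only [Finset.sum_const, Finset.card_univ, Fintype.card_fin, smul_eq_mul, zero_add]
      ring

theorem sum_Ioi_swap (j : ℕ) (g : Fin j → ℤ) :
    ∑ k, ∑ i ∈ Finset.Ioi k, g i = ∑ i : Fin j, (i : ℤ) * g i := by
  have h1 : ∀ k : Fin j, ∑ i ∈ Finset.Ioi k, g i = ∑ i, if k < i then g i else 0 := by
    intro k
    rw [← Finset.sum_filter]
    congr 1
    ext x; simp
  simp only [h1]
  rw [Finset.sum_comm]
  refine Finset.sum_congr rfl fun i _ => ?_
  rw [← Finset.sum_filter, Finset.sum_const]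
  have : (Finset.univ.filter fun k : Fin j => k < i) = Finset.Iio i := by ext x; simp
  rw [this, Fin.card_Iio]
  simp [mul_comm]

lemma mem_gnu {j : ℕ} (γ : Fin j → ℤ) (k : Fin j) :
    (2 * (k : ℤ) + 1 ∈ (gMap j γ).2) ↔ Odd (γ k) := by
  simp only [gMap, Finset.mem_image, Finset.mem_filter, Finset.mem_univ, true_and]
  constructor
  · rintro ⟨k', hk', he⟩
    have : k' = k := two_mul_inj he
    rwa [this] at hk'
  · intro h; exact ⟨k, h, rfl⟩

lemma f_eq_P {j : ℕ} (γ : Fin j → ℤ) (k : Fin j) :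
    (if 2 * (k : ℤ) + 1 ∈ (gMap j γ).2 then (1:ℤ) else 0) = P (γ k) := by
  rw [P]
  rcases Int.even_or_odd (γ k) with h | h
  · rw [if_pos h, if_neg (by rw [mem_gnu]; exact Int.not_odd_iff_even.2 h)]
  · rw [if_neg (Int.not_even_iff_odd.2 h), if_pos ((mem_gnu γ k).2 h)]

lemma nu_eq {j : ℕ} (ν : Finset ℤ) (hν : ∀ m ∈ ν, Odd m ∧ 1 ≤ m ∧ m ≤ 2 * (j:ℤ) - 1) :
    Finset.image (fun k : Fin j => 2 * (k : ℤ) + 1)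
      (Finset.univ.filter fun k => 2 * (k : ℤ) + 1 ∈ ν) = ν := by
  ext m
  simp only [Finset.mem_image, Finset.mem_filter, Finset.mem_univ, true_and]
  constructor
  · rintro ⟨k, hk, rfl⟩; exact hk
  · intro hm
    obtain ⟨⟨t, ht⟩, h1, h2⟩ := hν m hm
    have ht0 : 0 ≤ t := by omega
    have htj : t.toNat < j := by omega
    have hval : ((⟨t.toNat, htj⟩ : Fin j) : ℤ) = t := by
      simp only [Fin.val_mk]; omega
    have he : 2 * ((⟨t.toNat, htj⟩ : Fin j) : ℤ) + 1 = m := by rw [hval]; omega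
    exact ⟨⟨t.toNat, htj⟩, by rwa [he], he⟩

lemma sum_nu {j : ℕ} (γ : Fin j → ℤ) :
    ∑ m ∈ (gMap j γ).2, m = ∑ k : Fin j, (2 * (k : ℤ) + 1) * P (γ k) := by
  rw [gMap, Finset.sum_image (fun a _ b _ h => two_mul_inj h), Finset.sum_filter]
  refine Finset.sum_congr rfl fun k _ => ?_
  rcases Int.even_or_odd (γ k) with h | h
  · rw [if_neg (Int.not_odd_iff_even.2 h), P_even h, mul_zero]
  · rw [if_pos h, P_odd h, mul_one]

lemma sum_gMap (j : ℕ) (γ : Fin j → ℤ) :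
    ∑ k, (gMap j γ).1 k = (∑ k, γ k) + ∑ k : Fin j, (2 * (k : ℤ) + 1) * P (γ k) := by
  have e : ∀ k : Fin j, (gMap j γ).1 k
      = γ k + (4 * ((k : ℤ) + 1) - 2 * j - 2) + (P (γ k) + 2 * ∑ i ∈ Finset.Ioi k, P (γ i)) := by
    intro k; simp only [gMap]; ring
  rw [Finset.sum_congr rfl (fun k _ => e k), Finset.sum_add_distrib, Finset.sum_add_distrib,
    sum_coeff_zero, add_zero, Finset.sum_add_distrib, ← Finset.mul_sum, sum_Ioi_swap,
    Finset.mul_sum, ← Finset.sum_add_distrib]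
  congr 1
  refine Finset.sum_congr rfl fun k _ => ?_
  ring

lemma hg (j : ℕ) (γ : Fin j → ℤ) : hMap j (gMap j γ) = γ := by
  funext k
  simp only [hMap, f_eq_P]
  simp only [gMap]
  ring

lemma key1 {n j : ℕ} {γ : Fin j → ℤ} (hγ : γ ∈ Gset n j) : gMap j γ ∈ Sset n j := by
  obtain ⟨hpos, hgap, hsum⟩ := hγ
  have hanti : Antitone (gMap j γ).1 := by
    apply le_of_consec
    intro i hi
    obtain ⟨hg2, hg3⟩ := hgap i hi
    simp only [gMap]
    rw [sum_Ioi_succ i hi (fun x => P (γ x))]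
    set S := ∑ x ∈ Finset.Ioi (⟨i + 1, hi⟩ : Fin j), P (γ x) with hS
    rcases P_cases (γ ⟨i, Nat.lt_of_succ_lt hi⟩) with ⟨hev, hPa⟩ | ⟨⟨a, ha⟩, hPa⟩
    · have hg3' := hg3 hev
      obtain ⟨a, ha⟩ := hev
      rcases P_cases (γ ⟨i + 1, hi⟩) with ⟨⟨b, hb⟩, hPb⟩ | ⟨⟨b, hb⟩, hPb⟩ <;> omega
    · rcases P_cases (γ ⟨i + 1, hi⟩) with ⟨⟨b, hb⟩, hPb⟩ | ⟨⟨b, hb⟩, hPb⟩ <;> omega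
  have hbound : ∀ k, 2 * (j : ℤ) ≤ (gMap j γ).1 k := by
    intro k
    have hj : 0 < j := k.pos
    have hj' : j - 1 < j := by omega
    have hk : k ≤ (⟨j - 1, hj'⟩ : Fin j) := by
      rw [Fin.le_def]
      simp only [Fin.val_mk]
      omega
    refine le_trans ?_ (hanti hk)
    simp only [gMap]
    rw [Ioi_last_empty hj, Finset.sum_empty]
    have h1 := hpos ⟨j - 1, hj'⟩
    rcases P_cases (γ ⟨j - 1, hj'⟩) with ⟨⟨a, ha⟩, hPa⟩ | ⟨⟨a, ha⟩, hPa⟩ <;> omega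
  refine ⟨hanti, ?_, ?_, ?_, ?_, ?_⟩
  · intro k
    have := hbound k
    have hj : 0 < j := k.pos
    omega
  · intro k
    refine ⟨?_, hbound k⟩
    rcases P_cases (γ k) with ⟨⟨a, ha⟩, hPa⟩ | ⟨⟨a, ha⟩, hPa⟩
    · exact ⟨a + 2 * ((k : ℤ) + 1) - j - 1 + ∑ i ∈ Finset.Ioi k, P (γ i), by
        simp only [gMap]; rw [hPa, ha]; ring⟩
    · exact ⟨a + 1 + 2 * ((k : ℤ) + 1) - j - 1 + ∑ i ∈ Finset.Ioi k, P (γ i), by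
        simp only [gMap]; rw [hPa, ha]; ring⟩
  · exact le_trans (Finset.card_image_le) (le_trans (Finset.card_filter_le _ _) (by simp))
  · intro m hm
    simp only [gMap, Finset.mem_image, Finset.mem_filter, Finset.mem_univ, true_and] at hm
    obtain ⟨k, hk, rfl⟩ := hm
    have := k.isLt
    refine ⟨⟨(k : ℤ), by ring⟩, by omega, by omega⟩
  · rw [sum_gMap, sum_nu, add_sub_cancel_right, hsum]

lemma hMap_odd_iff {j : ℕ} {σ : (Fin j → ℤ) × Finset ℤ}
    (heven : ∀ k, Even (σ.1 k)) (k : Fin j) :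
    Odd (hMap j σ k) ↔ 2 * (k : ℤ) + 1 ∈ σ.2 := by
  obtain ⟨p, hp⟩ := heven k
  by_cases hm : 2 * (k : ℤ) + 1 ∈ σ.2
  · simp only [hm, iff_true]
    refine ⟨p - 2 * ((k : ℤ) + 1) + j - ∑ i ∈ Finset.Ioi k,
      (if 2 * (i : ℤ) + 1 ∈ σ.2 then (1:ℤ) else 0), ?_⟩
    simp only [hMap, if_pos hm, hp]
    ring
  · simp only [hm, iff_false, Int.not_odd_iff_even]
    refine ⟨p - 2 * ((k : ℤ) + 1) + j + 1 - ∑ i ∈ Finset.Ioi k,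
      (if 2 * (i : ℤ) + 1 ∈ σ.2 then (1:ℤ) else 0), ?_⟩
    simp only [hMap, if_neg hm, hp]
    ring

lemma gh {n j : ℕ} {σ : (Fin j → ℤ) × Finset ℤ} (hσ : σ ∈ Sset n j) :
    gMap j (hMap j σ) = σ := by
  obtain ⟨hanti, hpos, heven, hcard, hν, hsum⟩ := hσ
  have heven' : ∀ k, Even (σ.1 k) := fun k => (heven k).1
  have hP : ∀ k : Fin j, P (hMap j σ k) = (if 2 * (k : ℤ) + 1 ∈ σ.2 then (1:ℤ) else 0) := by
    intro k
    by_cases hm : 2 * (k : ℤ) + 1 ∈ σ.2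
    · rw [if_pos hm, P_odd ((hMap_odd_iff heven' k).2 hm)]
    · rw [if_neg hm, P_even (Int.not_odd_iff_even.1
        (fun ho => hm ((hMap_odd_iff heven' k).1 ho)))]
  have h1 : (gMap j (hMap j σ)).1 = σ.1 := by
    funext k
    simp only [gMap, hP]
    simp only [hMap]
    ring
  have h2 : (gMap j (hMap j σ)).2 = σ.2 := by
    simp only [gMap]
    have : (Finset.univ.filter fun k : Fin j => Odd (hMap j σ k))
        = Finset.univ.filter fun k : Fin j => 2 * (k : ℤ) + 1 ∈ σ.2 := by
      apply Finset.filter_congr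
      intro k _
      simp only [hMap_odd_iff heven' k]
    rw [this, nu_eq _ hν]
  exact Prod.ext h1 h2

lemma key2 {n j : ℕ} {σ : (Fin j → ℤ) × Finset ℤ} (hσ : σ ∈ Sset n j) :
    hMap j σ ∈ Gset n j := by
  obtain ⟨hanti, hpos, heven, hcard, hν, hsum⟩ := hσ
  have heven' : ∀ k, Even (σ.1 k) := fun k => (heven k).1
  have hgap : ∀ i : ℕ, ∀ hi : i + 1 < j,
      2 ≤ hMap j σ ⟨i, Nat.lt_of_succ_lt hi⟩ - hMap j σ ⟨i + 1, hi⟩ ∧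
      (Even (hMap j σ ⟨i, Nat.lt_of_succ_lt hi⟩) →
        3 ≤ hMap j σ ⟨i, Nat.lt_of_succ_lt hi⟩ - hMap j σ ⟨i + 1, hi⟩) := by
    intro i hi
    have hAB : σ.1 ⟨i + 1, hi⟩ ≤ σ.1 ⟨i, Nat.lt_of_succ_lt hi⟩ := by
      apply hanti
      rw [Fin.le_def]
      simp only [Fin.val_mk]
      omega
    constructor
    · simp only [hMap]
      rw [sum_Ioi_succ i hi]
      set A := σ.1 ⟨i, Nat.lt_of_succ_lt hi⟩ with hA
      set B := σ.1 ⟨i + 1, hi⟩ with hB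
      set S := ∑ x ∈ Finset.Ioi (⟨i + 1, hi⟩ : Fin j),
        (if 2 * (x : ℤ) + 1 ∈ σ.2 then (1:ℤ) else 0) with hS
      by_cases hm1 : 2 * ((i : ℕ) : ℤ) + 1 ∈ σ.2 <;>
        by_cases hm2 : 2 * ((i + 1 : ℕ) : ℤ) + 1 ∈ σ.2
      · rw [if_pos hm1, if_pos hm2]; push_cast; linarith
      · rw [if_pos hm1, if_neg hm2]; push_cast; linarith
      · rw [if_neg hm1, if_pos hm2]; push_cast; linarith
      · rw [if_neg hm1, if_neg hm2]; push_cast; linarith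
    · intro hev
      have hm1 : ¬ (2 * ((i : ℕ) : ℤ) + 1 ∈ σ.2) := by
        intro hm
        have ho : Odd (hMap j σ ⟨i, Nat.lt_of_succ_lt hi⟩) :=
          (hMap_odd_iff heven' ⟨i, Nat.lt_of_succ_lt hi⟩).2 hm
        exact (Int.not_even_iff_odd.2 ho) hev
      simp only [hMap]
      rw [sum_Ioi_succ i hi]
      set A := σ.1 ⟨i, Nat.lt_of_succ_lt hi⟩ with hA
      set B := σ.1 ⟨i + 1, hi⟩ with hB
      set S := ∑ x ∈ Finset.Ioi (⟨i + 1, hi⟩ : Fin j),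
        (if 2 * (x : ℤ) + 1 ∈ σ.2 then (1:ℤ) else 0) with hS
      rw [if_neg hm1]
      by_cases hm2 : 2 * ((i + 1 : ℕ) : ℤ) + 1 ∈ σ.2
      · rw [if_pos hm2]; push_cast; linarith
      · rw [if_neg hm2]; push_cast; linarith
  have hpos' : ∀ k, 1 ≤ hMap j σ k := by
    intro k
    have hj : 0 < j := k.pos
    have hj' : j - 1 < j := by omega
    have hanti' : Antitone (hMap j σ) :=
      le_of_consec _ (fun i hi => by have := (hgap i hi).1; omega)
    have hk : k ≤ (⟨j - 1, hj'⟩ : Fin j) := by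
      rw [Fin.le_def]; simp only [Fin.val_mk]; omega
    refine le_trans ?_ (hanti' hk)
    have h1 := (heven ⟨j - 1, hj'⟩).2
    simp only [hMap]
    rw [Ioi_last_empty hj, Finset.sum_empty]
    set A := σ.1 ⟨j - 1, hj'⟩ with hA
    by_cases hm : 2 * (((j - 1 : ℕ)) : ℤ) + 1 ∈ σ.2
    · rw [if_pos hm]
      have hc : ((j - 1 : ℕ) : ℤ) = (j : ℤ) - 1 := by omega
      rw [hc]
      linarith
    · rw [if_neg hm]
      have hc : ((j - 1 : ℕ) : ℤ) = (j : ℤ) - 1 := by omega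
      rw [hc]
      linarith
  refine ⟨hpos', hgap, ?_⟩
  have h4 := gh ⟨hanti, hpos, heven, hcard, hν, hsum⟩
  have e1 := sum_gMap j (hMap j σ)
  have e2 := sum_nu (hMap j σ)
  rw [h4] at e1 e2
  rw [e1, e2] at hsum
  linarith

def ggEquiv (n j : ℕ) : Gset n j ≃ Sset n j where
  toFun := fun x => ⟨gMap j x.1, key1 x.2⟩
  invFun := fun x => ⟨hMap j x.1, key2 x.2⟩
  left_inv := fun x => Subtype.ext (hg j x.1)
  right_inv := fun x => Subtype.ext (gh x.2)

/-- For every `n ≥ 0` and `j ≥ 1`, `G_{n,j}` is in bijection with `S_{n,j}`;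
consequently `∑_{j ≥ 0} |G_{n,j}| = ∑_{j ≥ 0} |S_{n,j}|`, i.e. the number of
Göllnitz–Gordon partitions of `n` equals the number of signed Göllnitz–Gordon
partitions of `n` (for `j = 0` both sets consist of the empty partition when
`n = 0` and are empty otherwise). -/
theorem gg_signed_gg_bijection (n : ℕ) :
    (∀ j : ℕ, 0 < j → Nonempty (Gset n j ≃ Sset n j)) ∧
    Nat.card (Σ j : ℕ, Gset n j) = Nat.card (Σ j : ℕ, Sset n j) := by
  refine ⟨fun j _ => ⟨ggEquiv n j⟩, ?_⟩
  exact Nat.card_congr (Equiv.sigmaCongrRight fun j => ggEquiv n j)
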